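/- Let R be a commutative ℚ-algebra and x ∈ R. Suppose x lies in a graded piece of weight q of a grading of R for which multiplication adds weights minus g, i.e. assume the products x^i vanish whenever i·q - (i-1)·g < 0. Define ψ^n(x) = n^{g-q} x for n ≥ 1, and set λ(x,t) = exp(Σ_{n≥1} ((-1)^{n-1}/n) ψ^n(x) t^n) and γ(x,t) = λ(x, t/(1-t)). Then the coefficient of x (i.e. the linear term) in γ^i(x) equals (-1)^{i-1} (i-1)! · S(g-q, i), where S denotes the Stirling number of the second kind. -/

import Mathlib

/-- Stirling numbers of the second kind. -/
def stirling2 : ℕ → ℕ → ℕ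
  | 0, 0 => 1
  | 0, _ + 1 => 0
  | _ + 1, 0 => 0
  | n + 1, k + 1 => (k + 1) * stirling2 n (k + 1) + stirling2 n k

/-- The power series `t/(1-t) = t + t² + t³ + ⋯` over `ℚ`. -/
noncomputable def tOneSubT : PowerSeries ℚ := PowerSeries.mk fun n => if n = 0 then 0 else 1

/-- `F_d(t) = ∑_{n ≥ 1} ((-1)^{n-1}/n) n^d (t/(1-t))^n`, so that
`γ(x,t) = λ(x, t/(1-t)) = exp(x · F_d(t))` for `ψ^n(x) = n^d x`. -/
noncomputable def Fser (d : ℕ) : PowerSeries ℚ :=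
  PowerSeries.mk fun i => ∑ n ∈ Finset.range (i + 1),
    (if n = 0 then (0 : ℚ) else (-1) ^ (n - 1) / (n : ℚ) * (n : ℚ) ^ d) *
      PowerSeries.coeff (R := ℚ) i (tOneSubT ^ n)

/-- The coefficient of `t^i` in `exp(x · F_d(t)) ∈ ℚ[x][[t]]`, as a polynomial in `x`. -/
noncomputable def gammaPoly (d i : ℕ) : Polynomial ℚ :=
  ∑ m ∈ Finset.range (i + 1),
    Polynomial.C ((Nat.factorial m : ℚ)⁻¹ * PowerSeries.coeff (R := ℚ) i (Fser d ^ m)) *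
      Polynomial.X ^ m

/-- The universal coefficient `a(i; d, m)` of `x^m` in `γ^i(x)`. -/
noncomputable def acoef (i d m : ℕ) : ℚ := (gammaPoly d i).coeff m

/-- The coefficient of `t^i` in `exp(x · F_d(t))` evaluated at an element `x` of a
commutative `ℚ`-algebra `R`; this is `γ^i(x)` for the operations `ψ^n(x) = n^d x`. -/
noncomputable def gammaCoeff {R : Type*} [CommRing R] [Algebra ℚ R] (d : ℕ) (x : R) (i : ℕ) : R :=
  ∑ m ∈ Finset.range (i + 1),
    ((Nat.factorial m : ℚ)⁻¹ * PowerSeries.coeff (R := ℚ) i (Fser d ^ m)) • x ^ m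

lemma stirling2_succ_zero (n : ℕ) : stirling2 (n+1) 0 = 0 := rfl
lemma stirling2_zero_succ (n : ℕ) : stirling2 0 (n+1) = 0 := rfl
lemma stirling2_succ_succ (n k : ℕ) :
    stirling2 (n+1) (k+1) = (k + 1) * stirling2 n (k + 1) + stirling2 n k := rfl

lemma stirling2_one (n : ℕ) : stirling2 (n+1) 1 = 1 := by
  induction n with
  | zero => rfl
  | succ n ih => rw [stirling2_succ_succ, stirling2_succ_zero, ih]

/-- `S(d+1, i+1) = ∑_{j≤d} C(d,j) S(j,i)`. -/
lemma stirling2_binomial (d : ℕ) : ∀ i : ℕ,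
    stirling2 (d+1) (i+1) = ∑ j ∈ Finset.range (d+1), d.choose j * stirling2 j i := by
  induction d with
  | zero => intro i; cases i <;> simp [stirling2_succ_succ, stirling2_zero_succ, stirling2_one]
  | succ d ih =>
    intro i
    cases i with
    | zero =>
      rw [Finset.sum_range_succ' (fun j => (d+1).choose j * stirling2 j 0) (d+1)]
      have hz : ∀ j, stirling2 (j+1) 0 = 0 := stirling2_succ_zero
      simp only [hz, Nat.mul_zero, Finset.sum_const_zero, Nat.choose_zero_right, Nat.zero_add,
        Nat.one_mul]
      exact stirling2_one (d+1)
    | succ k =>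
      have e1 : ∀ j ∈ Finset.range (d+1), (d+1).choose (j+1) * stirling2 (j+1) (k+1)
          = ((k+1) * (d.choose j * stirling2 j (k+1)) + d.choose j * stirling2 j k)
            + d.choose (j+1) * stirling2 (j+1) (k+1) := by
        intro j _; rw [Nat.choose_succ_succ, stirling2_succ_succ]; ring
      have e2 : (∑ j ∈ Finset.range (d+1), d.choose (j+1) * stirling2 (j+1) (k+1))
          + (d+1).choose 0 * stirling2 0 (k+1)
          = ∑ j ∈ Finset.range (d+1), d.choose j * stirling2 j (k+1) := by
        have h := (Finset.sum_range_succ' (fun j => d.choose j * stirling2 j (k+1)) (d+1)).symm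
        simp only [Nat.choose_zero_right, Nat.one_mul] at h ⊢
        rw [h, Finset.sum_range_succ, Nat.choose_succ_self, Nat.zero_mul, Nat.add_zero]
      symm
      calc ∑ j ∈ Finset.range (d+2), (d+1).choose j * stirling2 j (k+1)
          = (∑ j ∈ Finset.range (d+1), (d+1).choose (j+1) * stirling2 (j+1) (k+1))
            + (d+1).choose 0 * stirling2 0 (k+1) := Finset.sum_range_succ' _ _
        _ = (∑ j ∈ Finset.range (d+1),
              (((k+1) * (d.choose j * stirling2 j (k+1)) + d.choose j * stirling2 j k)
                + d.choose (j+1) * stirling2 (j+1) (k+1)))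
            + (d+1).choose 0 * stirling2 0 (k+1) := by
              rw [Finset.sum_congr rfl e1]
        _ = (k+1) * (∑ j ∈ Finset.range (d+1), d.choose j * stirling2 j (k+1))
            + (∑ j ∈ Finset.range (d+1), d.choose j * stirling2 j k)
            + ((∑ j ∈ Finset.range (d+1), d.choose (j+1) * stirling2 (j+1) (k+1))
               + (d+1).choose 0 * stirling2 0 (k+1)) := by
              rw [Finset.sum_add_distrib, Finset.sum_add_distrib, Finset.mul_sum]; ring
        _ = (k+1) * stirling2 (d+1) (k+1+1) + stirling2 (d+1) (k+1) + stirling2 (d+1) (k+1+1) := by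
              rw [e2, ← ih, ← ih]
        _ = stirling2 (d+1+1) (k+1+1) := by rw [stirling2_succ_succ (d+1) (k+1)]; ring

/-- `∑_{n≤i} (-1)^n C(i,n) n^d = (-1)^i i! S(d,i)` in `ℚ`. -/
lemma alt_sum_pow (i : ℕ) : ∀ d : ℕ,
    ∑ n ∈ Finset.range (i+1), (-1:ℚ)^n * (i.choose n : ℚ) * (n:ℚ)^d
      = (-1:ℚ)^i * (i.factorial : ℚ) * (stirling2 d i : ℚ) := by
  induction i with
  | zero =>
    intro d
    cases d with
    | zero => simp [show stirling2 0 0 = 1 from rfl]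
    | succ d => simp [stirling2_succ_zero]
  | succ i ih =>
    intro d
    have key : ∑ n ∈ Finset.range (i+2), (-1:ℚ)^n * ((i+1).choose n : ℚ) * (n:ℚ)^d
        = (∑ n ∈ Finset.range (i+1), (-1:ℚ)^n * (i.choose n : ℚ) * (n:ℚ)^d)
          - ∑ m ∈ Finset.range (i+1), (-1:ℚ)^m * (i.choose m : ℚ) * ((m:ℚ)+1)^d := by
      rw [Finset.sum_range_succ' (fun n => (-1:ℚ)^n * ((i+1).choose n : ℚ) * (n:ℚ)^d) (i+1)]
      have h1 : ∀ m ∈ Finset.range (i+1),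
          (-1:ℚ)^(m+1) * ((i+1).choose (m+1) : ℚ) * ((m+1:ℕ):ℚ)^d
          = (-1:ℚ)^(m+1) * (i.choose (m+1) : ℚ) * ((m+1:ℕ):ℚ)^d
            - (-1:ℚ)^m * (i.choose m : ℚ) * ((m:ℚ)+1)^d := by
        intro m _
        rw [Nat.choose_succ_succ]
        push_cast
        ring
      rw [Finset.sum_congr rfl h1, Finset.sum_sub_distrib]
      have h2 : (∑ m ∈ Finset.range (i+1), (-1:ℚ)^(m+1) * (i.choose (m+1) : ℚ) * ((m+1:ℕ):ℚ)^d)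
          + (-1:ℚ)^0 * ((i+1).choose 0 : ℚ) * ((0:ℕ):ℚ)^d
          = ∑ n ∈ Finset.range (i+1), (-1:ℚ)^n * (i.choose n : ℚ) * (n:ℚ)^d := by
        have h := (Finset.sum_range_succ'
          (fun n => (-1:ℚ)^n * (i.choose n : ℚ) * (n:ℚ)^d) (i+1)).symm
        simp only [Nat.choose_zero_right, Nat.cast_one, Nat.cast_zero] at h ⊢
        rw [h, Finset.sum_range_succ, Nat.choose_succ_self]
        norm_num
      rw [sub_add_eq_add_sub, h2]
    rw [key, ih d]
    have expand : ∀ m ∈ Finset.range (i+1), (-1:ℚ)^m * (i.choose m : ℚ) * ((m:ℚ)+1)^d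
        = ∑ j ∈ Finset.range (d+1),
            (d.choose j : ℚ) * ((-1:ℚ)^m * (i.choose m : ℚ) * (m:ℚ)^j) := by
      intro m _
      rw [add_pow, Finset.mul_sum]
      exact Finset.sum_congr rfl fun j _ => by ring
    rw [Finset.sum_congr rfl expand, Finset.sum_comm]
    have inner : ∀ j ∈ Finset.range (d+1),
        ∑ m ∈ Finset.range (i+1), (d.choose j : ℚ) * ((-1:ℚ)^m * (i.choose m : ℚ) * (m:ℚ)^j)
        = (d.choose j : ℚ) * ((-1:ℚ)^i * (i.factorial : ℚ) * (stirling2 j i : ℚ)) := by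
      intro j _
      rw [← Finset.mul_sum, ih j]
    rw [Finset.sum_congr rfl inner]
    have : ∑ j ∈ Finset.range (d+1),
        (d.choose j : ℚ) * ((-1:ℚ)^i * (i.factorial : ℚ) * (stirling2 j i : ℚ))
        = (-1:ℚ)^i * (i.factorial : ℚ) * (stirling2 (d+1) (i+1) : ℚ) := by
      rw [stirling2_binomial d i]
      push_cast
      rw [Finset.mul_sum]
      exact Finset.sum_congr rfl fun j _ => by ring
    rw [this, stirling2_succ_succ]
    push_cast
    rw [Nat.factorial_succ]
    push_cast
    ring

lemma tOneSubT_eq : tOneSubT = PowerSeries.X * PowerSeries.mk 1 := by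
  ext n; cases n <;> simp [tOneSubT]

lemma coeff_tOneSubT_pow {n i : ℕ} (hn : 1 ≤ n) (hni : n ≤ i) :
    PowerSeries.coeff (R := ℚ) i (tOneSubT ^ n) = ((i-1).choose (n-1) : ℚ) := by
  obtain ⟨m, rfl⟩ : ∃ m, n = m + 1 := ⟨n-1, by omega⟩
  rw [tOneSubT_eq, mul_pow, PowerSeries.mk_one_pow_eq_mk_choose_add]
  have hi : i = (i - (m + 1)) + (m + 1) := (Nat.sub_add_cancel hni).symm
  rw [hi, PowerSeries.coeff_X_pow_mul, PowerSeries.coeff_mk]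
  congr 2
  omega

lemma coeff_Fser (d i : ℕ) (hd : 1 ≤ d) (hi : 1 ≤ i) :
    PowerSeries.coeff (R := ℚ) i (Fser d)
      = (-1:ℚ)^(i-1) * ((i-1).factorial : ℚ) * (stirling2 d i : ℚ) := by
  obtain ⟨j, rfl⟩ : ∃ j, i = j + 1 := ⟨i - 1, by omega⟩
  simp only [Nat.add_sub_cancel]
  have hiQ : ((j:ℚ) + 1) ≠ 0 := by positivity
  rw [Fser, PowerSeries.coeff_mk]
  have term : ∀ n ∈ Finset.range (j+2),
      (if n = 0 then (0 : ℚ) else (-1) ^ (n - 1) / (n : ℚ) * (n : ℚ) ^ d) *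
        PowerSeries.coeff (R := ℚ) (j+1) (tOneSubT ^ n)
      = -((-1:ℚ)^n * ((j+1).choose n : ℚ) * (n:ℚ)^d) / ((j:ℚ)+1) := by
    intro n hn
    rcases Nat.eq_zero_or_pos n with rfl | hnpos
    · simp [zero_pow (by omega : d ≠ 0)]
    · have hni : n ≤ j + 1 := by
        have := Finset.mem_range.mp hn; omega
      rw [if_neg (by omega), coeff_tOneSubT_pow hnpos hni]
      simp only [Nat.add_sub_cancel]
      have hch : ((j:ℚ)+1) * (j.choose (n-1) : ℚ) = (n : ℚ) * ((j+1).choose n : ℚ) := by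
        have h2 := Nat.add_one_mul_choose_eq j (n-1)
        have e2 : (n-1)+1 = n := by omega
        rw [e2] at h2
        have h3 := congrArg (Nat.cast : ℕ → ℚ) h2
        push_cast at h3
        linarith [h3]
      have hnQ : (n : ℚ) ≠ 0 := Nat.cast_ne_zero.mpr (by omega)
      have hsign : (-1:ℚ)^(n-1) = -(-1:ℚ)^n := by
        conv_rhs => rw [show n = (n-1)+1 by omega]
        rw [pow_succ]; ring
      rw [hsign]
      field_simp
      linear_combination (-1:ℚ) * hch
  rw [Finset.sum_congr rfl term, ← Finset.sum_div]
  have halt := alt_sum_pow (j+1) d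
  have hrange : j + 1 + 1 = j + 2 := rfl
  rw [hrange] at halt
  rw [Finset.sum_neg_distrib, halt, Nat.factorial_succ]
  push_cast
  field_simp
  ring

lemma acoef_eq (i d m : ℕ) (hm : m ≤ i) :
    acoef i d m = (Nat.factorial m : ℚ)⁻¹ * PowerSeries.coeff (R := ℚ) i (Fser d ^ m) := by
  rw [acoef, gammaPoly, Polynomial.finset_sum_coeff]
  rw [Finset.sum_eq_single m]
  · rw [Polynomial.coeff_C_mul, Polynomial.coeff_X_pow,
      if_pos rfl, mul_one]
  · intro k _ hk
    rw [Polynomial.coeff_C_mul, Polynomial.coeff_X_pow,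
      if_neg (by omega), mul_zero]
  · intro h
    exact absurd (Finset.mem_range.mpr (by omega)) h

/-- For `x` of weight `q < g` (so `ψ^n(x) = n^{g-q} x`) with `x^i = 0` whenever
`i·q - (i-1)·g < 0`, the element `γ^i(x)` is the universal polynomial
`∑_m a(i; g-q, m) x^m` in `x`, and the linear coefficient is
`a(i; g-q, 1) = (-1)^{i-1} (i-1)! S(g-q, i)` with `S` the Stirling number of the
second kind. -/
theorem stmt_3 {R : Type*} [CommRing R] [Algebra ℚ R] (g q : ℕ) (hq : q < g) (x : R)
    (hx : ∀ i : ℕ, (i : ℤ) * (q : ℤ) - ((i : ℤ) - 1) * (g : ℤ) < 0 → x ^ i = 0)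
    (i : ℕ) (hi : 1 ≤ i) :
    gammaCoeff (g - q) x i = ∑ m ∈ Finset.range (i + 1), acoef i (g - q) m • x ^ m ∧
    acoef i (g - q) 1 =
      (-1 : ℚ) ^ (i - 1) * (Nat.factorial (i - 1) : ℚ) * (stirling2 (g - q) i : ℚ) := by
  constructor
  · rw [gammaCoeff]
    refine Finset.sum_congr rfl fun m hm => ?_
    rw [acoef_eq i (g-q) m (by have := Finset.mem_range.mp hm; omega)]
  · rw [acoef_eq i (g-q) 1 hi, pow_one, coeff_Fser (g-q) i (by omega) hi]
    simp [Nat.factorial_one]
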